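/- Consider the WPCS reward-maximization problem P1-A with N sensors: maximize Σ_{n=1}^N a_n·log(1+ℓ_n) − c·T₀·Σ_{n=1}^N P_n over variables ℓ_n ≥ 0, t_n > 0, P_n ≥ 0, subject to Σ_{n=1}^N P_n ≤ P₀, the time constraints β_n·ℓ_n + t_n ≤ T, and the energy constraints α_n·ℓ_n + (t_n/h_n)·f(ℓ_n/(R_n·t_n)) ≤ η·P_n·h_n·T₀. If (ℓ*, t*, P*) is a maximizer of this problem, then for every n the energy constraint holds with equality: α_n·ℓ_n* + (t_n*/h_n)·f(ℓ_n*/(R_n·t_n*)) = η·P_n*·h_n·T₀. -/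

import Mathlib

open Real Finset

/-- Transmission-power function `f(x) = N₀ (2^{x/B} - 1)`. -/
noncomputable def fRate (N0 B x : ℝ) : ℝ := N0 * ((2 : ℝ) ^ (x / B) - 1)

/-- At a maximizer of Problem P1-A, the energy constraint is tight for every sensor. -/
theorem energy_constraint_tight_at_optimum
    (N : ℕ) (hN : 0 < N)
    (N0 B c T0 P0 η T : ℝ)
    (hN0 : 0 < N0) (hB : 0 < B) (hc : 0 < c) (hT0 : 0 < T0)
    (hP0 : 0 < P0) (hη : 0 < η) (hT : 0 < T)
    (a α β h R : Fin N → ℝ)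
    (ha : ∀ n, 0 < a n) (hα : ∀ n, 0 < α n) (hβ : ∀ n, 0 < β n)
    (hh : ∀ n, 0 < h n) (hR : ∀ n, 0 < R n)
    (ℓs ts Ps : Fin N → ℝ)
    (hℓs : ∀ n, 0 ≤ ℓs n) (hts : ∀ n, 0 < ts n) (hPs : ∀ n, 0 ≤ Ps n)
    (hPsum : ∑ n, Ps n ≤ P0)
    (htime : ∀ n, β n * ℓs n + ts n ≤ T)
    (henergy : ∀ n,
      α n * ℓs n + (ts n / h n) * fRate N0 B (ℓs n / (R n * ts n))
        ≤ η * Ps n * h n * T0)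
    (hopt : ∀ ℓ t P : Fin N → ℝ,
      (∀ n, 0 ≤ ℓ n) → (∀ n, 0 < t n) → (∀ n, 0 ≤ P n) →
      (∑ n, P n ≤ P0) →
      (∀ n, β n * ℓ n + t n ≤ T) →
      (∀ n, α n * ℓ n + (t n / h n) * fRate N0 B (ℓ n / (R n * t n))
          ≤ η * P n * h n * T0) →
      (∑ n, a n * Real.log (1 + ℓ n)) - c * T0 * (∑ n, P n)
        ≤ (∑ n, a n * Real.log (1 + ℓs n)) - c * T0 * (∑ n, Ps n)) :
    ∀ n, α n * ℓs n + (ts n / h n) * fRate N0 B (ℓs n / (R n * ts n))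
        = η * Ps n * h n * T0 := by
  intro n
  set E : Fin N → ℝ := fun m =>
    α m * ℓs m + (ts m / h m) * fRate N0 B (ℓs m / (R m * ts m)) with hE
  have hEnn : ∀ m, 0 ≤ E m := by
    intro m
    have h1 : 0 ≤ α m * ℓs m := mul_nonneg (hα m).le (hℓs m)
    have h2 : 0 ≤ fRate N0 B (ℓs m / (R m * ts m)) := by
      have hx : 0 ≤ ℓs m / (R m * ts m) :=
        div_nonneg (hℓs m) (mul_nonneg (hR m).le (hts m).le)
      have : (1 : ℝ) ≤ (2 : ℝ) ^ (ℓs m / (R m * ts m) / B) :=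
        Real.one_le_rpow (by norm_num) (div_nonneg hx hB.le)
      unfold fRate
      nlinarith
    have h3 : 0 ≤ ts m / h m := div_nonneg (hts m).le (hh m).le
    exact add_nonneg h1 (mul_nonneg h3 h2)
  by_contra hne
  have hlt : E n < η * Ps n * h n * T0 := lt_of_le_of_ne (henergy n) hne
  have hden : 0 < η * h n * T0 := mul_pos (mul_pos hη (hh n)) hT0
  set P' : Fin N → ℝ := Function.update Ps n (E n / (η * h n * T0)) with hP'
  have hP'n : P' n = E n / (η * h n * T0) := Function.update_self _ _ _
  have hP'm : ∀ m, m ≠ n → P' m = Ps m := fun m hm => Function.update_of_ne hm _ _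
  have hP'nn : ∀ m, 0 ≤ P' m := by
    intro m
    rcases eq_or_ne m n with rfl | hm
    · rw [hP'n]; exact div_nonneg (hEnn m) hden.le
    · rw [hP'm m hm]; exact hPs m
  have hP'lt : P' n < Ps n := by
    rw [hP'n, div_lt_iff₀ hden]
    calc E n < η * Ps n * h n * T0 := hlt
      _ = Ps n * (η * h n * T0) := by ring
  have hsumlt : ∑ m, P' m < ∑ m, Ps m := by
    apply Finset.sum_lt_sum (fun m _ => ?_) ⟨n, Finset.mem_univ n, hP'lt⟩
    rcases eq_or_ne m n with rfl | hm
    · exact hP'lt.le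
    · rw [hP'm m hm]
  have hP'energy : ∀ m,
      α m * ℓs m + (ts m / h m) * fRate N0 B (ℓs m / (R m * ts m))
        ≤ η * P' m * h m * T0 := by
    intro m
    rcases eq_or_ne m n with rfl | hm
    · rw [hP'n]
      have : η * (E m / (η * h m * T0)) * h m * T0 = E m := by
        field_simp
        rw [mul_div_cancel_right₀ _ (hh m).ne']
      rw [this]
    · rw [hP'm m hm]; exact henergy m
  have := hopt ℓs ts P' hℓs hts hP'nn (hsumlt.le.trans hPsum) htime hP'energy
  have hcT0 : 0 < c * T0 := by positivity
  nlinarith [mul_lt_mul_of_pos_left hsumlt hcT0]
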